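/- Fix an integer n ≥ 1 and define, for integers i,j,k,t, β_{i,j,k}^t := C(n−2k, i−k) · Σ_{p=0}^{t} (−1)^{k−p} C(k,p) C(i−p, t−p) C(n+p−i−k, n+t−i−j). Then for all integers k, i, j, t with 0 ≤ k ≤ ⌊n/2⌋, k ≤ i ≤ n−k, k ≤ j ≤ n−k, 0 ≤ t ≤ i, t ≤ j and i+j ≤ n+t, one has β_{i,j,k}^t = β_{j,i,k}^t. -/

import Mathlib

/-- Real-valued binomial coefficient `C(a,b)` of integers, equal to `0` whenever `b < 0` or
`b > a`. -/
noncomputable def zchoose (a b : ℤ) : ℝ :=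
  if 0 ≤ b ∧ b ≤ a then ((a.toNat).choose b.toNat : ℝ) else 0

/-- `β_{i,j,k}^t = C(n−2k, i−k) · Σ_{p=0}^{t} (−1)^{k−p} C(k,p) C(i−p, t−p)
C(n+p−i−k, n+t−i−j)`, binomial coefficients being zero in degenerate ranges. -/
noncomputable def betaCoef (n i j k t : ℕ) : ℝ :=
  zchoose ((n : ℤ) - 2 * k) ((i : ℤ) - k) *
    ∑ p ∈ Finset.range (t + 1),
      (-1 : ℝ) ^ ((k : ℤ) - (p : ℤ)) * zchoose (k : ℤ) (p : ℤ) *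
        zchoose ((i : ℤ) - p) ((t : ℤ) - p) *
        zchoose ((n : ℤ) + p - i - k) ((n : ℤ) + t - i - j)

lemma zc_zero {a b : ℤ} (h : ¬(0 ≤ b ∧ b ≤ a)) : zchoose a b = 0 := if_neg h

lemma zc_eq {a b : ℤ} (hb : 0 ≤ b) (hba : b ≤ a) :
    zchoose a b = ((a.toNat).choose b.toNat : ℝ) := if_pos ⟨hb, hba⟩

lemma zc_nat (a b : ℕ) : zchoose a b = (a.choose b : ℝ) := by
  by_cases h : b ≤ a
  · rw [zc_eq (Int.ofNat_nonneg b) (by exact_mod_cast h)]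
    simp
  · rw [zc_zero (by omega), Nat.choose_eq_zero_of_lt (by omega)]
    simp

lemma zc_tri (a b c : ℤ) :
    zchoose a b * zchoose b c = zchoose a c * zchoose (a - c) (b - c) := by
  by_cases h : 0 ≤ c ∧ c ≤ b ∧ b ≤ a
  · obtain ⟨h1, h2, h3⟩ := h
    rw [zc_eq (h1.trans h2) h3, zc_eq h1 h2, zc_eq h1 (h2.trans h3), zc_eq (by omega) (by omega)]
    have e1 : (a - c).toNat = a.toNat - c.toNat := by omega
    have e2 : (b - c).toNat = b.toNat - c.toNat := by omega
    rw [e1, e2, ← Nat.cast_mul, ← Nat.cast_mul, Nat.choose_mul (by omega)]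
  · have hl : zchoose a b = 0 ∨ zchoose b c = 0 := by
      rcases (by omega : ¬(0 ≤ b ∧ b ≤ a) ∨ ¬(0 ≤ c ∧ c ≤ b)) with h' | h'
      exacts [Or.inl (zc_zero h'), Or.inr (zc_zero h')]
    have hr : zchoose a c = 0 ∨ zchoose (a - c) (b - c) = 0 := by
      rcases (by omega : ¬(0 ≤ c ∧ c ≤ a) ∨ ¬(0 ≤ b - c ∧ b - c ≤ a - c)) with h' | h'
      exacts [Or.inl (zc_zero h'), Or.inr (zc_zero h')]
    rcases hl with h' | h' <;> rcases hr with h'' | h'' <;> rw [h', h''] <;> ring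

lemma zc_symm (a b : ℤ) : zchoose a b = zchoose a (a - b) := by
  by_cases h : 0 ≤ b ∧ b ≤ a
  · rw [zc_eq h.1 h.2, zc_eq (by omega) (by omega)]
    have e1 : (a - b).toNat = a.toNat - b.toNat := by omega
    rw [e1, Nat.choose_symm (by omega)]
  · rw [zc_zero h, zc_zero (by omega)]

lemma zc_tri_symm (m x y : ℤ) :
    zchoose m x * zchoose (m - x) y = zchoose m y * zchoose (m - y) x := by
  rw [zc_symm m x, zc_tri m (m - x) y]
  congr 1
  rw [zc_symm (m - y) x]
  congr 1
  ring

lemma zc_vander (x y : ℕ) (m : ℤ) (R : ℕ) (hR : x ≤ R ∨ m ≤ (R : ℤ)) :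
    zchoose ((x : ℤ) + y) m = ∑ a ∈ Finset.range (R + 1), zchoose x a * zchoose y (m - a) := by
  rcases lt_or_ge m 0 with hm | hm
  · rw [zc_zero (by omega)]
    symm
    apply Finset.sum_eq_zero
    intro a _
    rw [zc_zero (a := (y : ℤ)) (b := m - a) (by omega), mul_zero]
  · obtain ⟨M, rfl⟩ : ∃ M : ℕ, m = (M : ℤ) := ⟨m.toNat, (Int.toNat_of_nonneg hm).symm⟩
    have hterm : ∀ a : ℕ, zchoose x a * zchoose y ((M : ℤ) - a)
        = if a ≤ M then ((x.choose a : ℝ) * (y.choose (M - a) : ℝ)) else 0 := by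
      intro a
      by_cases hh : a ≤ M
      · rw [if_pos hh, zc_nat, (by omega : (M : ℤ) - a = ((M - a : ℕ) : ℤ)), zc_nat]
      · rw [if_neg hh, zc_zero (a := (y : ℤ)) (by omega), mul_zero]
    have base : zchoose ((x : ℤ) + y) M
        = ∑ a ∈ Finset.range (M + 1), (x.choose a : ℝ) * (y.choose (M - a) : ℝ) := by
      have h0 := Nat.add_choose_eq x y M
      rw [Finset.Nat.sum_antidiagonal_eq_sum_range_succ_mk] at h0
      rw [(by push_cast; ring : ((x : ℤ) + y) = ((x + y : ℕ) : ℤ)), zc_nat, h0]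
      push_cast
      rfl
    simp only [hterm]
    rcases le_or_gt M R with hMR | hMR
    · rw [base, ← Finset.sum_subset (Finset.range_subset_range.mpr (by omega : M + 1 ≤ R + 1))
        (fun a _ ha => if_neg (by simp at ha; omega))]
      apply Finset.sum_congr rfl
      intro a ha
      rw [if_pos (by simp at ha; omega)]
    · have hxR : x ≤ R := by omega
      rw [base, ← Finset.sum_subset (Finset.range_subset_range.mpr (by omega : R + 1 ≤ M + 1))
        (fun a _ ha => by
          have : x < a := by simp at ha; omega
          rw [Nat.choose_eq_zero_of_lt this]
          simp)]
      apply Finset.sum_congr rfl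
      intro a ha
      rw [if_pos (by simp at ha; omega)]

lemma alt_sum (M b R : ℕ) (hbMR : b + M ≤ R) :
    ∑ p ∈ Finset.range (R + 1), (-1 : ℝ) ^ p * zchoose M ((p : ℤ) - b)
      = (-1 : ℝ) ^ b * (if M = 0 then 1 else 0) := by
  have hsub : Finset.Ico b (b + M + 1) ⊆ Finset.range (R + 1) := by
    intro a ha
    simp at ha ⊢
    omega
  rw [← Finset.sum_subset hsub (fun a _ ha => by
      rw [zc_zero (by simp at ha; omega), mul_zero])]
  rw [Finset.sum_Ico_eq_sum_range]
  have hcongr : ∀ s ∈ Finset.range (b + M + 1 - b),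
      (-1 : ℝ) ^ (b + s) * zchoose M ((↑(b + s) : ℤ) - b)
      = (-1 : ℝ) ^ b * ((-1 : ℝ) ^ s * (M.choose s : ℝ)) := by
    intro s _
    rw [(by push_cast; ring : ((↑(b + s) : ℤ) - b) = (s : ℤ)), zc_nat, pow_add]
    ring
  rw [Finset.sum_congr rfl hcongr, ← Finset.mul_sum]
  congr 1
  have h0 := Int.alternating_sum_range_choose (n := M)
  rw [(by omega : b + M + 1 - b = M + 1)]
  have cast0 : ((if M = 0 then (1 : ℤ) else 0 : ℤ) : ℝ) = if M = 0 then 1 else 0 := by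
    split <;> simp
  rw [← cast0, ← h0]
  push_cast
  exact Finset.sum_congr rfl fun x _ => by ring

lemma inner_eval (k T b R : ℕ) (hT : T ≤ R) :
    ∑ p ∈ Finset.range (R + 1),
        (-1 : ℝ) ^ p * zchoose k p * zchoose ((k : ℤ) - p) ((T : ℤ) - p) * zchoose p b
      = if b = T then (-1 : ℝ) ^ T * zchoose k T else 0 := by
  have step : ∀ p : ℕ,
      (-1 : ℝ) ^ p * zchoose k p * zchoose ((k : ℤ) - p) ((T : ℤ) - p) * zchoose p b
        = zchoose k T * zchoose T b * ((-1 : ℝ) ^ p * zchoose ((T : ℤ) - b) ((p : ℤ) - b)) := by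
    intro p
    have h1 := zc_tri (k : ℤ) (T : ℤ) (p : ℤ)
    have h2 := zc_tri (T : ℤ) (p : ℤ) (b : ℤ)
    linear_combination (-(-1 : ℝ) ^ p * zchoose (p : ℤ) (b : ℤ)) * h1 +
      (((-1 : ℝ) ^ p) * zchoose (k : ℤ) (T : ℤ)) * h2
  rw [Finset.sum_congr rfl (fun p _ => step p), ← Finset.mul_sum]
  by_cases hbT : b ≤ T
  · have hTb : ((T : ℤ) - b) = ((T - b : ℕ) : ℤ) := by omega
    simp only [hTb]
    rw [alt_sum (T - b) b R (by omega)]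
    by_cases hb : b = T
    · subst hb
      rw [if_pos rfl, if_pos (by omega), zc_nat b b, Nat.choose_self]
      push_cast
      ring
    · rw [if_neg (by omega), if_neg hb]
      ring
  · rw [zc_zero (a := (T : ℤ)) (b := (b : ℤ)) (by omega), if_neg (by omega)]
    ring

/-- The manifestly `i ↔ j` symmetric form of `betaCoef`. -/
noncomputable def Fform (n i j k t : ℕ) : ℝ :=
  (-1 : ℝ) ^ k * ∑ q ∈ Finset.range (t + 1),
    (-1 : ℝ) ^ q * zchoose k q * zchoose ((n : ℤ) - 2 * k) ((t : ℤ) - q) *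
      (zchoose ((n : ℤ) - 2 * k - ((t : ℤ) - q)) ((i : ℤ) - k - ((t : ℤ) - q)) *
       zchoose ((n : ℤ) - k - i) ((j : ℤ) - k - ((t : ℤ) - q)))

lemma sign_eq (k p : ℕ) : (-1 : ℝ) ^ ((k : ℤ) - (p : ℤ)) = (-1 : ℝ) ^ k * (-1 : ℝ) ^ p := by
  rw [zpow_sub₀ (by norm_num : (-1 : ℝ) ≠ 0), zpow_natCast, zpow_natCast, div_eq_mul_inv,
    ← inv_pow]
  norm_num

lemma beta_eq_F (n k i j t : ℕ) (hki : k ≤ i) (hin : i + k ≤ n) :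
    betaCoef n i j k t = Fform n i j k t := by
  unfold betaCoef Fform
  have expand : ∀ p ∈ Finset.range (t + 1),
      (-1 : ℝ) ^ ((k : ℤ) - (p : ℤ)) * zchoose (k : ℤ) (p : ℤ) *
        zchoose ((i : ℤ) - p) ((t : ℤ) - p) *
        zchoose ((n : ℤ) + p - i - k) ((n : ℤ) + t - i - j)
      = ∑ a ∈ Finset.range (t + 1), ∑ b ∈ Finset.range (t + 1),
          (zchoose ((i : ℤ) - k) (a : ℤ) *
            zchoose ((n : ℤ) - i - k) (((n : ℤ) + t - i - j) - b)) *
          ((-1 : ℝ) ^ k *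
            ((-1 : ℝ) ^ p * zchoose (k : ℤ) (p : ℤ) *
              zchoose ((k : ℤ) - p) (((t : ℤ) - a) - p) * zchoose (p : ℤ) (b : ℤ))) := by
    intro p hp
    simp only [Finset.mem_range] at hp
    by_cases hpk : p ≤ k
    · have v1 : zchoose ((i : ℤ) - p) ((t : ℤ) - p)
          = ∑ a ∈ Finset.range (t + 1),
              zchoose ((i - k : ℕ) : ℤ) a * zchoose ((k - p : ℕ) : ℤ) (((t : ℤ) - p) - a) := by
        rw [show (i : ℤ) - p = ((i - k : ℕ) : ℤ) + ((k - p : ℕ) : ℤ) by omega]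
        exact zc_vander (i - k) (k - p) ((t : ℤ) - p) t (Or.inr (by omega))
      have v2 : zchoose ((n : ℤ) + p - i - k) ((n : ℤ) + t - i - j)
          = ∑ b ∈ Finset.range (t + 1),
              zchoose (p : ℤ) b *
                zchoose ((n - i - k : ℕ) : ℤ) (((n : ℤ) + t - i - j) - b) := by
        rw [show (n : ℤ) + p - i - k = ((p : ℕ) : ℤ) + ((n - i - k : ℕ) : ℤ) by omega]
        exact zc_vander p (n - i - k) ((n : ℤ) + t - i - j) t (Or.inl (by omega))
      rw [v1, v2, sign_eq]
      simp only [Finset.mul_sum, Finset.sum_mul]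
      rw [Finset.sum_comm]
      apply Finset.sum_congr rfl
      intro a _
      apply Finset.sum_congr rfl
      intro b _
      rw [show ((i - k : ℕ) : ℤ) = (i : ℤ) - k by omega,
        show ((k - p : ℕ) : ℤ) = (k : ℤ) - p by omega,
        show ((n - i - k : ℕ) : ℤ) = (n : ℤ) - i - k by omega,
        show ((t : ℤ) - p) - a = ((t : ℤ) - a) - p by ring]
      ring
    · have h0 : zchoose (k : ℤ) (p : ℤ) = 0 := zc_zero (by omega)
      rw [h0]
      simp [h0]
  rw [Finset.sum_congr rfl expand]
  rw [Finset.sum_comm]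
  have swap2 : ∀ a ∈ Finset.range (t + 1),
      (∑ p ∈ Finset.range (t + 1), ∑ b ∈ Finset.range (t + 1),
        (zchoose ((i : ℤ) - k) (a : ℤ) *
          zchoose ((n : ℤ) - i - k) (((n : ℤ) + t - i - j) - b)) *
        ((-1 : ℝ) ^ k *
          ((-1 : ℝ) ^ p * zchoose (k : ℤ) (p : ℤ) *
            zchoose ((k : ℤ) - p) (((t : ℤ) - a) - p) * zchoose (p : ℤ) (b : ℤ))))
      = zchoose ((i : ℤ) - k) (a : ℤ) *
          (zchoose ((n : ℤ) - i - k) (((n : ℤ) + t - i - j) - ((t - a : ℕ) : ℤ)) *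
            ((-1 : ℝ) ^ k * ((-1 : ℝ) ^ (t - a) * zchoose (k : ℤ) ((t - a : ℕ) : ℤ)))) := by
    intro a ha
    simp only [Finset.mem_range] at ha
    rw [Finset.sum_comm]
    have inner : ∀ b ∈ Finset.range (t + 1),
        (∑ p ∈ Finset.range (t + 1),
          (zchoose ((i : ℤ) - k) (a : ℤ) *
            zchoose ((n : ℤ) - i - k) (((n : ℤ) + t - i - j) - b)) *
          ((-1 : ℝ) ^ k *
            ((-1 : ℝ) ^ p * zchoose (k : ℤ) (p : ℤ) *
              zchoose ((k : ℤ) - p) (((t : ℤ) - a) - p) * zchoose (p : ℤ) (b : ℤ))))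
        = if b = t - a then
            (zchoose ((i : ℤ) - k) (a : ℤ) *
              zchoose ((n : ℤ) - i - k) (((n : ℤ) + t - i - j) - b)) *
            ((-1 : ℝ) ^ k * ((-1 : ℝ) ^ (t - a) * zchoose (k : ℤ) ((t - a : ℕ) : ℤ)))
          else 0 := by
      intro b _
      rw [← Finset.mul_sum, ← Finset.mul_sum]
      have harg : ∀ p : ℕ, ((t : ℤ) - a) - p = (((t - a : ℕ) : ℤ)) - p := by
        intro p; omega
      simp only [harg]
      rw [inner_eval k (t - a) b t (by omega)]
      split <;> ring
    rw [Finset.sum_congr rfl inner, Finset.sum_ite_eq' (Finset.range (t + 1)) (t - a),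
      if_pos (by simp <;> omega)]
    ring
  rw [Finset.sum_congr rfl swap2]
  rw [← Finset.sum_range_reflect]
  rw [Finset.mul_sum, Finset.mul_sum]
  apply Finset.sum_congr rfl
  intro q hq
  simp only [Finset.mem_range] at hq
  rw [show t + 1 - 1 - q = t - q by omega, show t - (t - q) = q by omega,
    show ((t - q : ℕ) : ℤ) = (t : ℤ) - q by omega]
  have e1 : zchoose ((n : ℤ) - 2 * k) ((i : ℤ) - k) * zchoose ((i : ℤ) - k) ((t : ℤ) - q)
      = zchoose ((n : ℤ) - 2 * k) ((t : ℤ) - q) *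
        zchoose ((n : ℤ) - 2 * k - ((t : ℤ) - q)) ((i : ℤ) - k - ((t : ℤ) - q)) :=
    zc_tri _ _ _
  have e2 : zchoose ((n : ℤ) - i - k) (((n : ℤ) + t - i - j) - q)
      = zchoose ((n : ℤ) - k - i) ((j : ℤ) - k - ((t : ℤ) - q)) := by
    rw [show (n : ℤ) - i - k = (n : ℤ) - k - i by ring, zc_symm]
    congr 1
    ring
  rw [e2]
  linear_combination ((-1 : ℝ) ^ k * (-1 : ℝ) ^ q *
    zchoose ((n : ℤ) - k - i) ((j : ℤ) - k - ((t : ℤ) - q)) * zchoose (k : ℤ) (q : ℤ)) * e1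

lemma F_symm (n i j k t : ℕ) : Fform n i j k t = Fform n j i k t := by
  unfold Fform
  congr 1
  apply Finset.sum_congr rfl
  intro q _
  congr 1
  have e1 : (n : ℤ) - k - i = ((n : ℤ) - 2 * k - ((t : ℤ) - q)) - ((i : ℤ) - k - ((t : ℤ) - q)) := by
    ring
  have e2 : (n : ℤ) - k - j = ((n : ℤ) - 2 * k - ((t : ℤ) - q)) - ((j : ℤ) - k - ((t : ℤ) - q)) := by
    ring
  rw [e1, e2, zc_tri_symm]

/-- for `0 ≤ k ≤ ⌊n/2⌋`, `k ≤ i ≤ n−k`, `k ≤ j ≤ n−k`, `0 ≤ t ≤ i`, `t ≤ j`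
and `i+j ≤ n+t`, one has `β_{i,j,k}^t = β_{j,i,k}^t`. -/
theorem statement15 (n : ℕ) (hn : 1 ≤ n) (k i j t : ℕ)
    (hk : k ≤ n / 2) (hki : k ≤ i) (hin : i + k ≤ n) (hkj : k ≤ j) (hjn : j + k ≤ n)
    (hti : t ≤ i) (htj : t ≤ j) (hijt : i + j ≤ n + t) :
    betaCoef n i j k t = betaCoef n j i k t := by
  rw [beta_eq_F n k i j t hki hin, beta_eq_F n k j i t hkj hjn, F_symm]
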